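/- (Membership lemma, single point) There exists a constant C > 0, independent of m, n and k, such that for every m, n, k ∈ ℕ with k ≥ 1, all vectors b, a_1, …, a_n ∈ ℝ^m, and every fixed x ∈ ℝ^n with b ≠ Σ_{i=1}^n x_i·a_i, the probability, with respect to the product Gaussian measure on k×m real matrices P (each entry i.i.d. standard normal N(0,1)), of the event {T_P(b) ≠ Σ_{i=1}^n x_i·T_P(a_i)} is at least 1 − 2·exp(−C·k), where T_P(y) = (1/√k)·P·y. -/

import Mathlib

open MeasureTheory ProbabilityTheory ENNReal

/-- The product Gaussian measure on `k × m` real matrices: each entry is an independent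
standard normal `N(0,1)` random variable. -/
noncomputable def gaussMeasure (k m : ℕ) : Measure (Fin k → Fin m → ℝ) :=
  Measure.pi fun _ : Fin k => Measure.pi fun _ : Fin m => gaussianReal 0 1

/-- The random linear map associated to a `k × m` matrix `P`: `T_P(y) = (1/√k) · P · y`. -/
noncomputable def TP {k m : ℕ} (P : Fin k → Fin m → ℝ)
    (x : EuclideanSpace ℝ (Fin m)) : EuclideanSpace ℝ (Fin k) :=
  (Real.sqrt k)⁻¹ • (EuclideanSpace.equiv (Fin k) ℝ).symm
    ((Matrix.of P).mulVec (EuclideanSpace.equiv (Fin m) ℝ x))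

/-- The product of standard Gaussians on `Fin m → ℝ` is absolutely continuous w.r.t.
Lebesgue measure. -/
lemma piGauss_ac : ∀ m : ℕ,
    (Measure.pi fun _ : Fin m => gaussianReal 0 1) ≪ (volume : Measure (Fin m → ℝ)) := by
  intro m
  induction m with
  | zero =>
    intro s hs
    rcases Set.eq_empty_or_nonempty s with h | h
    · simp [h]
    · exfalso
      have hsu : s = Set.univ := by
        apply Set.eq_univ_of_forall
        intro x
        obtain ⟨y, hy⟩ := h
        have : x = y := Subsingleton.elim x y
        rwa [this]
      rw [hsu] at hs
      simp [MeasureTheory.volume_pi, Measure.pi_univ] at hs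
  | succ m ih =>
    have e := MeasurableEquiv.piFinSuccAbove (fun _ : Fin (m + 1) => ℝ) 0
    have h1 := MeasureTheory.measurePreserving_piFinSuccAbove
      (fun _ : Fin (m + 1) => gaussianReal 0 1) 0
    have h2 := MeasureTheory.measurePreserving_piFinSuccAbove
      (fun _ : Fin (m + 1) => (volume : Measure ℝ)) 0
    have hg : (Measure.pi fun _ : Fin (m + 1) => gaussianReal 0 1) =
        (((gaussianReal 0 1).prod (Measure.pi fun _ : Fin m => gaussianReal 0 1)).map
          (MeasurableEquiv.piFinSuccAbove (fun _ : Fin (m + 1) => ℝ) 0).symm) :=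
      (h1.symm _).map_eq.symm
    have hv : (Measure.pi fun _ : Fin (m + 1) => (volume : Measure ℝ)) =
        (((volume : Measure ℝ).prod (Measure.pi fun _ : Fin m => (volume : Measure ℝ))).map
          (MeasurableEquiv.piFinSuccAbove (fun _ : Fin (m + 1) => ℝ) 0).symm) :=
      (h2.symm _).map_eq.symm
    have hacr : gaussianReal 0 1 ≪ (volume : Measure ℝ) :=
      gaussianReal_absolutelyContinuous 0 one_ne_zero
    have hprod : ((gaussianReal 0 1).prod (Measure.pi fun _ : Fin m => gaussianReal 0 1)) ≪
        ((volume : Measure ℝ).prod (Measure.pi fun _ : Fin m => (volume : Measure ℝ))) := by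
      have ih' : (Measure.pi fun _ : Fin m => gaussianReal 0 1) ≪
          (Measure.pi fun _ : Fin m => (volume : Measure ℝ)) := by
        rw [← MeasureTheory.volume_pi]; exact ih
      exact hacr.prod ih'
    have : (volume : Measure (Fin (m + 1) → ℝ)) =
        Measure.pi fun _ : Fin (m + 1) => (volume : Measure ℝ) := MeasureTheory.volume_pi
    rw [this, hg, hv]
    exact hprod.map (MeasurableEquiv.piFinSuccAbove (fun _ : Fin (m + 1) => ℝ) 0).symm.measurable

/-- A hyperplane through the origin in `Fin m → ℝ` is Lebesgue-null. -/
lemma hyperplane_null {m : ℕ} {v : Fin m → ℝ} (hv : v ≠ 0) :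
    (volume : Measure (Fin m → ℝ)) {p | ∑ j, p j * v j = 0} = 0 := by
  classical
  obtain ⟨j0, hj0⟩ : ∃ j, v j ≠ 0 := by
    by_contra h
    push_neg at h
    exact hv (funext h)
  set f : (Fin m → ℝ) →ₗ[ℝ] ℝ :=
    { toFun := fun p => ∑ j, p j * v j
      map_add' := by
        intro p q
        simp [add_mul, Finset.sum_add_distrib]
      map_smul' := by
        intro c p
        simp [Finset.mul_sum, mul_assoc] }
  have hker : LinearMap.ker f ≠ ⊤ := by
    intro h
    have : f (Pi.single j0 1) = 0 := by
      rw [← LinearMap.mem_ker, h]; trivial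
    simp only [f, LinearMap.coe_mk, AddHom.coe_mk] at this
    rw [Finset.sum_eq_single j0] at this
    · simp at this
      exact hj0 this
    · intro b _ hb
      simp [Pi.single_apply, hb]
    · simp
  have := Measure.addHaar_submodule (volume : Measure (Fin m → ℝ)) (LinearMap.ker f) hker
  have hset : {p : Fin m → ℝ | ∑ j, p j * v j = 0} = (LinearMap.ker f : Set (Fin m → ℝ)) := by
    ext p
    simp [f, LinearMap.mem_ker]
  rw [hset]
  exact this

theorem membership_lemma_single :
    ∃ C : ℝ, C > 0 ∧
      ∀ m n k : ℕ, 1 ≤ k →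
        ∀ (b : EuclideanSpace ℝ (Fin m)) (a : Fin n → EuclideanSpace ℝ (Fin m))
          (x : Fin n → ℝ), b ≠ ∑ i, x i • a i →
          gaussMeasure k m {P | TP P b ≠ ∑ i, x i • TP P (a i)} ≥
            ENNReal.ofReal (1 - 2 * Real.exp (-C * k)) := by
  classical
  refine ⟨1, one_pos, ?_⟩
  intro m n k hk b a x hb
  -- the "difference" vector
  set v : Fin m → ℝ := fun j => b j - ∑ i, x i * a i j with hv_def
  have hv : v ≠ 0 := by
    intro h
    apply hb
    ext j
    have hj : v j = 0 := by rw [h]; rfl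
    have hbj : b j = ∑ i, x i * a i j := sub_eq_zero.mp hj
    rw [hbj, WithLp.ofLp_sum, Finset.sum_apply]
    apply Finset.sum_congr rfl
    intro i _
    rw [PiLp.smul_apply, smul_eq_mul]
  -- index 0 of Fin k
  have hk0 : 0 < k := hk
  let i0 : Fin k := ⟨0, hk0⟩
  -- bad set is contained in a null cylinder over a hyperplane
  have hsub : {P : Fin k → Fin m → ℝ | ¬ TP P b ≠ ∑ i, x i • TP P (a i)} ⊆
      (Function.eval i0) ⁻¹' {p : Fin m → ℝ | ∑ j, p j * v j = 0} := by
    intro P hP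
    simp only [Set.mem_setOf_eq, not_not] at hP
    have happ : (TP P b) i0 = (∑ i, x i • TP P (a i)) i0 := by rw [hP]
    have hs : Real.sqrt k ≠ 0 := by
      refine Real.sqrt_ne_zero'.mpr ?_
      exact_mod_cast hk0
    have hTP : ∀ (w : EuclideanSpace ℝ (Fin m)),
        (TP P w) i0 = (Real.sqrt k)⁻¹ * ∑ j, P i0 j * w j := by
      intro w
      simp only [TP, PiLp.smul_apply, smul_eq_mul]
      congr 1
    rw [hTP] at happ
    have happ2 : (∑ i, x i • TP P (a i)) i0 =
        ∑ i, x i * ((Real.sqrt k)⁻¹ * ∑ j, P i0 j * (a i) j) := by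
      rw [WithLp.ofLp_sum, Finset.sum_apply]
      apply Finset.sum_congr rfl
      intro i _
      rw [PiLp.smul_apply, smul_eq_mul, hTP]
    rw [happ2] at happ
    simp only [Set.mem_preimage, Set.mem_setOf_eq, Function.eval]
    have key : ∑ j, P i0 j * b j = ∑ i, x i * ∑ j, P i0 j * (a i) j := by
      have hrhs : ∑ i, x i * ((Real.sqrt k)⁻¹ * ∑ j, P i0 j * (a i) j) =
          (Real.sqrt k)⁻¹ * ∑ i, x i * ∑ j, P i0 j * (a i) j := by
        rw [Finset.mul_sum]
        apply Finset.sum_congr rfl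
        intro i _
        ring
      exact mul_left_cancel₀ (inv_ne_zero hs) (happ.trans hrhs)
    have expand : ∑ j, P i0 j * v j =
        (∑ j, P i0 j * b j) - ∑ i, x i * ∑ j, P i0 j * (a i) j := by
      simp only [hv_def, mul_sub, Finset.sum_sub_distrib, Finset.mul_sum]
      congr 1
      rw [Finset.sum_comm]
      apply Finset.sum_congr rfl
      intro i _
      apply Finset.sum_congr rfl
      intro j _
      ring
    rw [expand, key, sub_self]
  -- the hyperplane is null for the row Gaussian measure
  have hrow : (Measure.pi fun _ : Fin m => gaussianReal 0 1)
      {p : Fin m → ℝ | ∑ j, p j * v j = 0} = 0 :=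
    piGauss_ac m (hyperplane_null hv)
  -- hence the cylinder is null for gaussMeasure
  have hcyl : gaussMeasure k m
      ((Function.eval i0) ⁻¹' {p : Fin m → ℝ | ∑ j, p j * v j = 0}) = 0 :=
    Measure.pi_eval_preimage_null _ hrow
  have hbad : gaussMeasure k m
      {P : Fin k → Fin m → ℝ | ¬ TP P b ≠ ∑ i, x i • TP P (a i)} = 0 :=
    measure_mono_null hsub hcyl
  -- the good set has full measure
  have hprob : gaussMeasure k m Set.univ = 1 := by
    simp [gaussMeasure]
  have hfull : gaussMeasure k m {P | TP P b ≠ ∑ i, x i • TP P (a i)} = 1 := by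
    have h1 : (1 : ℝ≥0∞) ≤ gaussMeasure k m {P | TP P b ≠ ∑ i, x i • TP P (a i)} := by
      have hunion : (Set.univ : Set (Fin k → Fin m → ℝ)) ⊆
          {P | TP P b ≠ ∑ i, x i • TP P (a i)} ∪
          {P | ¬ TP P b ≠ ∑ i, x i • TP P (a i)} := by
        intro P _
        by_cases h : TP P b ≠ ∑ i, x i • TP P (a i)
        · exact Or.inl h
        · exact Or.inr h
      calc (1 : ℝ≥0∞) = gaussMeasure k m Set.univ := hprob.symm
        _ ≤ gaussMeasure k m ({P | TP P b ≠ ∑ i, x i • TP P (a i)} ∪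
            {P | ¬ TP P b ≠ ∑ i, x i • TP P (a i)}) := measure_mono hunion
        _ ≤ gaussMeasure k m {P | TP P b ≠ ∑ i, x i • TP P (a i)} +
            gaussMeasure k m {P | ¬ TP P b ≠ ∑ i, x i • TP P (a i)} := measure_union_le _ _
        _ = gaussMeasure k m {P | TP P b ≠ ∑ i, x i • TP P (a i)} := by rw [hbad, add_zero]
    have h2 : gaussMeasure k m {P | TP P b ≠ ∑ i, x i • TP P (a i)} ≤ 1 := by
      rw [← hprob]; exact measure_mono (Set.subset_univ _)
    exact le_antisymm h2 h1
  rw [hfull]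
  have hle : (1 : ℝ) - 2 * Real.exp (-1 * k) ≤ 1 := by
    have : 0 < Real.exp (-1 * k) := Real.exp_pos _
    linarith
  calc ENNReal.ofReal (1 - 2 * Real.exp (-1 * k)) ≤ ENNReal.ofReal 1 :=
        ENNReal.ofReal_le_ofReal hle
    _ = 1 := ENNReal.ofReal_one
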